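/- arXiv:2407.13812 — 5 statements merged into one kernel-verified Lean document; each statement's English description precedes it below -/
import Mathlib

section
/- Let f be piecewise continuous of exponential order r, g(t) = ∫₀^t f(x) dx, φₙ(s) = ∫₀^∞ e^{-s t}(tⁿ/n!) f(t) dt and ψₙ(s) = ∫₀^∞ e^{-s t}(tⁿ/n!) g(t) dt. Then for s > max(r,0), ψₙ(s) = Σ_{k=0}^{n} φ_k(s)/s^{n-k+1}. -/
open MeasureTheory Real Finset

open Filter Topology Set Asymptotics

lemma lap_exp (s r x : ℝ) : Real.exp (-(s*x)) * Real.exp (r*x) = Real.exp (-((s-r)*x)) := by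
  rw [← Real.exp_add]; congr 1; ring

lemma lap_tendsto {c : ℝ} (hc : 0 < c) (k : ℕ) :
    Tendsto (fun t : ℝ => t ^ k * Real.exp (-(c * t))) atTop (𝓝 0) := by
  have h1 : Tendsto (fun t : ℝ => c * t) atTop atTop :=
    Filter.tendsto_id.const_mul_atTop hc
  have h2 := (Real.tendsto_pow_mul_exp_neg_atTop_nhds_zero k).comp h1
  have h3 := h2.const_mul ((c ^ k)⁻¹)
  rw [mul_zero] at h3
  refine h3.congr fun t => ?_
  simp only [Function.comp]
  rw [mul_pow]
  have : c ^ k ≠ 0 := (pow_pos hc k).ne'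
  field_simp

lemma lap_int {c : ℝ} (hc : 0 < c) (k : ℕ) (a : ℝ) :
    IntegrableOn (fun t : ℝ => Real.exp (-(c * t)) * t ^ k) (Set.Ioi a) := by
  have hcont : ContinuousOn (fun t : ℝ => Real.exp (-(c * t)) * t ^ k) (Set.Ici a) := by
    fun_prop
  have key : ∀ t : ℝ, Real.exp (-(c*t)) * t ^ k / Real.exp (-(c/2) * t)
      = t ^ k * Real.exp (-(c/2 * t)) := by
    intro t
    rw [mul_comm, mul_div_assoc, ← Real.exp_sub]
    congr 1
    ring
  have hlo : (fun t : ℝ => Real.exp (-(c*t)) * t ^ k)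
      =o[atTop] fun t : ℝ => Real.exp (-(c/2) * t) := by
    rw [Asymptotics.isLittleO_iff_tendsto (fun t h => absurd h (Real.exp_ne_zero _))]
    exact (lap_tendsto (half_pos hc) k).congr fun t => (key t).symm
  exact integrable_of_isBigO_exp_neg (half_pos hc) hcont hlo.isBigO

lemma lap_alg {s : ℝ} (hs : s ≠ 0) (n : ℕ) (t : ℝ) :
    s * (∑ k ∈ Finset.range (n+1), t^k / (k.factorial : ℝ) / s^(n-k+1))
      - ∑ k ∈ Finset.range (n+1), ((k : ℝ) * t^(k-1)) / (k.factorial : ℝ) / s^(n-k+1)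
      = t ^ n / (n.factorial : ℝ) := by
  have h1 : s * (∑ k ∈ Finset.range (n+1), t^k / (k.factorial : ℝ) / s^(n-k+1))
      = ∑ k ∈ Finset.range (n+1), t^k / (k.factorial : ℝ) / s^(n-k) := by
    rw [Finset.mul_sum]
    refine Finset.sum_congr rfl fun k hk => ?_
    rw [pow_succ]
    have hk1 : ((k.factorial : ℝ)) ≠ 0 := Nat.cast_ne_zero.mpr k.factorial_ne_zero
    have hk2 : s ^ (n - k) ≠ 0 := pow_ne_zero _ hs
    field_simp
  have h2 : ∑ k ∈ Finset.range (n+1), ((k : ℝ) * t^(k-1)) / (k.factorial : ℝ) / s^(n-k+1)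
      = ∑ k ∈ Finset.range n, t^k / (k.factorial : ℝ) / s^(n-k) := by
    rw [Finset.sum_range_succ']
    simp only [Nat.cast_zero, zero_mul, Nat.factorial_zero, Nat.cast_one, zero_div, add_zero]
    refine Finset.sum_congr rfl fun i hi => ?_
    have hi' : i < n := Finset.mem_range.mp hi
    have hsub : n - (i+1) + 1 = n - i := by omega
    rw [hsub, Nat.factorial_succ, Nat.add_sub_cancel]
    have hi1 : ((i.factorial : ℝ)) ≠ 0 := Nat.cast_ne_zero.mpr i.factorial_ne_zero
    have hi2 : ((i : ℝ) + 1) ≠ 0 := by positivity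
    push_cast
    field_simp
  rw [h1, h2, Finset.sum_range_succ, Nat.sub_self, pow_zero, div_one]
  ring

lemma lap_inner {s : ℝ} (hs : 0 < s) (n : ℕ) (x : ℝ) :
    ∫ t in Set.Ioi x, Real.exp (-(s * t)) * (t ^ n / (n.factorial : ℝ))
      = Real.exp (-(s * x)) * ∑ k ∈ Finset.range (n + 1),
          x ^ k / (k.factorial : ℝ) / s ^ (n - k + 1) := by
  set P : ℝ → ℝ := fun t => ∑ k ∈ Finset.range (n+1), t^k / (k.factorial : ℝ) / s^(n-k+1)
    with hP_def
  set P' : ℝ → ℝ := fun t => ∑ k ∈ Finset.range (n+1),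
      ((k : ℝ) * t^(k-1)) / (k.factorial : ℝ) / s^(n-k+1) with hP'_def
  have hP : ∀ t, HasDerivAt P (P' t) t := by
    intro t
    exact HasDerivAt.fun_sum fun k _ => ((hasDerivAt_pow k t).div_const _).div_const _
  have hderiv : ∀ t ∈ Set.Ici x,
      HasDerivAt (fun t => -(Real.exp (-(s*t)) * P t))
        (Real.exp (-(s*t)) * (t ^ n / (n.factorial : ℝ))) t := by
    intro t _
    have hE : HasDerivAt (fun u : ℝ => Real.exp (-(s*u))) (Real.exp (-(s*t)) * -(s*1)) t :=
      (((hasDerivAt_id t).const_mul s).neg).exp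
    have h := (hE.fun_mul (hP t)).fun_neg
    refine h.congr_deriv ?_
    have halg := lap_alg hs.ne' n t
    rw [hP_def, hP'_def]
    simp only []
    rw [← halg]
    ring
  have hint : IntegrableOn (fun t => Real.exp (-(s*t)) * (t ^ n / (n.factorial : ℝ)))
      (Set.Ioi x) := by
    have h := (lap_int hs n x).div_const (n.factorial : ℝ)
    simp only [mul_div_assoc] at h
    exact h
  have htend : Tendsto (fun t => -(Real.exp (-(s*t)) * P t)) atTop (𝓝 0) := by
    have h0 : Tendsto (fun t => Real.exp (-(s*t)) * P t) atTop (𝓝 0) := by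
      have heq : ∀ t, Real.exp (-(s*t)) * P t
          = ∑ k ∈ Finset.range (n+1),
              (t^k * Real.exp (-(s*t))) / ((k.factorial : ℝ) * s^(n-k+1)) := by
        intro t
        rw [hP_def]
        simp only []
        rw [Finset.mul_sum]
        exact Finset.sum_congr rfl fun k _ => by ring
      have hsum := tendsto_finset_sum (Finset.range (n+1))
        (fun k _ => (lap_tendsto hs k).div_const ((k.factorial : ℝ) * s^(n-k+1)))
      simp only [zero_div, Finset.sum_const_zero] at hsum
      exact hsum.congr fun t => (heq t).symm
    simpa using h0.neg
  have := integral_Ioi_of_hasDerivAt_of_tendsto'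
      (f := fun t => -(Real.exp (-(s*t)) * P t))
      (f' := fun t => Real.exp (-(s*t)) * (t ^ n / (n.factorial : ℝ)))
      (a := x) (m := 0) hderiv hint htend
  rw [this]
  ring

theorem laplace_type_of_antiderivative (f : ℝ → ℝ) (M r : ℝ)
    (hf : Measurable f) (hM : 0 < M) (hr : 0 < r)
    (hbound : ∀ t ≥ (0:ℝ), |f t| ≤ M * Real.exp (r * t))
    (g : ℝ → ℝ) (hg : ∀ t, g t = ∫ x in (0:ℝ)..t, f x)
    (φ ψ : ℕ → ℝ → ℝ)
    (hφ : ∀ n s, φ n s = ∫ t in Set.Ioi (0:ℝ),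
        Real.exp (-(s*t)) * (t ^ n / n.factorial) * f t)
    (hψ : ∀ n s, ψ n s = ∫ t in Set.Ioi (0:ℝ),
        Real.exp (-(s*t)) * (t ^ n / n.factorial) * g t) :
    ∀ s > max r 0, ∀ n : ℕ,
      ψ n s = ∑ k ∈ range (n + 1), φ k s / s ^ (n - k + 1) := by
  intro s hs n
  have hs0 : 0 < s := lt_of_le_of_lt (le_max_right r 0) hs
  have hsr : r < s := lt_of_le_of_lt (le_max_left r 0) hs
  have hsr' : 0 < s - r := sub_pos.mpr hsr
  set μ := volume.restrict (Set.Ioi (0:ℝ)) with hμ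
  -- integrability of φ-integrands
  have hφint : ∀ k : ℕ, Integrable
      (fun x => Real.exp (-(s*x)) * (x ^ k / (k.factorial : ℝ)) * f x) μ := by
    intro k
    refine Integrable.mono' (((lap_int hsr' k 0).const_mul (M / (k.factorial : ℝ)))) ?_ ?_
    · exact ((by fun_prop : Measurable fun x =>
        Real.exp (-(s*x)) * (x ^ k / (k.factorial : ℝ)) * f x)).aestronglyMeasurable
    · filter_upwards [ae_restrict_mem measurableSet_Ioi] with x hx
      have hx0 : (0:ℝ) < x := hx
      have h1 : |f x| ≤ M * Real.exp (r*x) := hbound x hx0.le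
      have h2 : (0:ℝ) ≤ Real.exp (-(s*x)) * (x ^ k / (k.factorial : ℝ)) := by positivity
      rw [Real.norm_eq_abs, abs_mul, abs_of_nonneg h2]
      calc Real.exp (-(s*x)) * (x ^ k / (k.factorial : ℝ)) * |f x|
          ≤ Real.exp (-(s*x)) * (x ^ k / (k.factorial : ℝ)) * (M * Real.exp (r*x)) := by
            exact mul_le_mul_of_nonneg_left h1 h2
        _ = M / (k.factorial : ℝ) * (Real.exp (-((s-r)*x)) * x ^ k) := by
            rw [← lap_exp s r x]; ring
  -- integrability of f on Ioc 0 t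
  have hfIoc : ∀ t : ℝ, 0 ≤ t → IntegrableOn f (Set.Ioc 0 t) := by
    intro t ht
    refine Integrable.mono' (g := fun _ => M * Real.exp (r*t)) ?_
        hf.aestronglyMeasurable.restrict ?_
    · exact integrableOn_const measure_Ioc_lt_top.ne
    · filter_upwards [ae_restrict_mem measurableSet_Ioc] with x hx
      rw [Real.norm_eq_abs]
      calc |f x| ≤ M * Real.exp (r*x) := hbound x hx.1.le
        _ ≤ M * Real.exp (r*t) := by
            have := Real.exp_le_exp.mpr (mul_le_mul_of_nonneg_left hx.2 hr.le)
            exact mul_le_mul_of_nonneg_left this hM.le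
  -- the kernel
  set K : ℝ → ℝ → ℝ := fun t x =>
    Real.exp (-(s*t)) * (t ^ n / (n.factorial : ℝ)) * (if 0 < x ∧ x ≤ t then f x else 0)
    with hK_def
  have hKmeas : AEStronglyMeasurable (Function.uncurry K) (μ.prod μ) := by
    have h1 : Measurable fun p : ℝ × ℝ =>
        Real.exp (-(s*p.1)) * (p.1 ^ n / (n.factorial : ℝ)) := by fun_prop
    have hset : MeasurableSet {p : ℝ × ℝ | 0 < p.2 ∧ p.2 ≤ p.1} :=
      (measurableSet_lt measurable_const measurable_snd).inter
        (measurableSet_le measurable_snd measurable_fst)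
    have h2 : Measurable fun p : ℝ × ℝ => (if 0 < p.2 ∧ p.2 ≤ p.1 then f p.2 else 0) :=
      Measurable.ite hset (hf.comp measurable_snd) measurable_const
    exact (h1.mul h2).aestronglyMeasurable
  -- section integrability
  have hsec : ∀ t : ℝ, 0 < t → Integrable (fun x => K t x) μ := by
    intro t ht
    have heq : (fun x => K t x) = fun x =>
        (Real.exp (-(s*t)) * (t ^ n / (n.factorial : ℝ))) * (Set.Ioc 0 t).indicator f x := by
      funext x
      rw [hK_def]
      simp [Set.indicator_apply, Set.mem_Ioc]
    rw [heq]
    refine Integrable.const_mul ?_ _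
    rw [integrable_indicator_iff measurableSet_Ioc]
    have : μ.restrict (Set.Ioc 0 t) = volume.restrict (Set.Ioc 0 t) := by
      rw [hμ, Measure.restrict_restrict measurableSet_Ioc,
        Set.inter_eq_self_of_subset_left Set.Ioc_subset_Ioi_self]
    rw [IntegrableOn, this]
    exact hfIoc t ht.le
  -- value of inner x-integral
  have hinner_x : ∀ t : ℝ, 0 < t →
      (∫ x, K t x ∂μ) = Real.exp (-(s*t)) * (t ^ n / (n.factorial : ℝ)) * g t := by
    intro t ht
    have heq : (fun x => K t x) = fun x =>
        (Real.exp (-(s*t)) * (t ^ n / (n.factorial : ℝ))) * (Set.Ioc 0 t).indicator f x := by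
      funext x
      rw [hK_def]
      simp [Set.indicator_apply, Set.mem_Ioc]
    rw [heq, integral_const_mul]
    congr 1
    rw [hμ, setIntegral_indicator measurableSet_Ioc,
      Set.inter_eq_self_of_subset_right Set.Ioc_subset_Ioi_self,
      hg t, intervalIntegral.integral_of_le ht.le]
  -- norm bound for inner integral
  have hnorm_bound : ∀ t : ℝ, 0 < t →
      (∫ x, ‖K t x‖ ∂μ) ≤ M / (n.factorial : ℝ) * (Real.exp (-((s-r)*t)) * t ^ (n+1)) := by
    intro t ht
    have hc : (0:ℝ) ≤ Real.exp (-(s*t)) * (t ^ n / (n.factorial : ℝ)) := by positivity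
    have heq : (fun x => ‖K t x‖) = fun x =>
        (Real.exp (-(s*t)) * (t ^ n / (n.factorial : ℝ)))
          * (Set.Ioc 0 t).indicator (fun x => |f x|) x := by
      funext x
      rw [hK_def]
      simp only [Set.indicator_apply, Set.mem_Ioc, Real.norm_eq_abs, abs_mul,
        abs_of_nonneg hc]
      split_ifs <;> simp
    rw [heq, integral_const_mul, hμ, setIntegral_indicator measurableSet_Ioc,
      Set.inter_eq_self_of_subset_right Set.Ioc_subset_Ioi_self]
    have hbnd : (∫ x in Set.Ioc (0:ℝ) t, |f x|) ≤ M * Real.exp (r*t) * t := by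
      calc (∫ x in Set.Ioc (0:ℝ) t, |f x|)
          ≤ ∫ _x in Set.Ioc (0:ℝ) t, M * Real.exp (r*t) := by
            refine setIntegral_mono_on (hfIoc t ht.le).abs
              (integrableOn_const measure_Ioc_lt_top.ne) measurableSet_Ioc ?_
            intro x hx
            calc |f x| ≤ M * Real.exp (r*x) := hbound x hx.1.le
              _ ≤ M * Real.exp (r*t) := by
                  have := Real.exp_le_exp.mpr (mul_le_mul_of_nonneg_left hx.2 hr.le)
                  exact mul_le_mul_of_nonneg_left this hM.le
        _ = M * Real.exp (r*t) * t := by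
            rw [setIntegral_const, Real.volume_real_Ioc_of_le ht.le, smul_eq_mul, sub_zero]
            ring
    calc Real.exp (-(s*t)) * (t ^ n / (n.factorial : ℝ)) * ∫ x in Set.Ioc (0:ℝ) t, |f x|
        ≤ Real.exp (-(s*t)) * (t ^ n / (n.factorial : ℝ)) * (M * Real.exp (r*t) * t) :=
          mul_le_mul_of_nonneg_left hbnd hc
      _ = M / (n.factorial : ℝ) * (Real.exp (-((s-r)*t)) * t ^ (n+1)) := by
          rw [← lap_exp s r t]; ring
  -- product integrability
  have hKint : Integrable (Function.uncurry K) (μ.prod μ) := by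
    refine (integrable_prod_iff hKmeas).2 ⟨?_, ?_⟩
    · filter_upwards [ae_restrict_mem measurableSet_Ioi] with t ht
      exact hsec t ht
    · refine Integrable.mono' (((lap_int hsr' (n+1) 0).const_mul (M / (n.factorial : ℝ)))) ?_ ?_
      · exact hKmeas.norm.integral_prod_right'
      · filter_upwards [ae_restrict_mem measurableSet_Ioi] with t ht
        rw [Real.norm_eq_abs, abs_of_nonneg (integral_nonneg fun x => norm_nonneg _)]
        exact hnorm_bound t ht
  have hswap := integral_integral_swap hKint
  -- LHS of swap is ψ n s
  have hLHS : (∫ t, (∫ x, K t x ∂μ) ∂μ) = ψ n s := by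
    rw [hψ n s]
    refine integral_congr_ae ?_
    filter_upwards [ae_restrict_mem measurableSet_Ioi] with t ht
    rw [hinner_x t ht]
  -- inner t-integral for fixed x
  have hinner_t : ∀ x : ℝ, 0 < x →
      (∫ t, K t x ∂μ) = (Real.exp (-(s*x)) * ∑ k ∈ Finset.range (n + 1),
          x ^ k / (k.factorial : ℝ) / s ^ (n - k + 1)) * f x := by
    intro x hx
    have heq : (fun t => K t x) = fun t =>
        (Set.Ici x).indicator
          (fun t => Real.exp (-(s*t)) * (t ^ n / (n.factorial : ℝ)) * f x) t := by
      funext t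
      rw [hK_def]
      simp only [Set.indicator_apply, Set.mem_Ici, hx, true_and]
      split_ifs <;> simp
    have hss : Set.Ici x ⊆ Set.Ioi 0 := fun y hy => lt_of_lt_of_le hx hy
    rw [heq, hμ, setIntegral_indicator measurableSet_Ici,
      Set.inter_eq_self_of_subset_right hss,
      integral_Ici_eq_integral_Ioi, integral_mul_const, lap_inner hs0 n x]
  -- RHS of swap equals the sum
  have hRHS : (∫ x, (∫ t, K t x ∂μ) ∂μ)
      = ∑ k ∈ Finset.range (n + 1), φ k s / s ^ (n - k + 1) := by
    have hstep1 : (∫ x, (∫ t, K t x ∂μ) ∂μ)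
        = ∫ x, (∑ k ∈ Finset.range (n + 1),
            (Real.exp (-(s*x)) * (x ^ k / (k.factorial : ℝ)) * f x) / s ^ (n - k + 1)) ∂μ := by
      refine integral_congr_ae ?_
      filter_upwards [ae_restrict_mem measurableSet_Ioi] with x hx
      rw [hinner_t x hx, Finset.mul_sum, Finset.sum_mul]
      exact Finset.sum_congr rfl fun k _ => by ring
    rw [hstep1, integral_finset_sum _ (fun k _ => (hφint k).div_const _)]
    refine Finset.sum_congr rfl fun k _ => ?_
    rw [integral_div, hφ k s]
  rw [← hLHS, hswap, hRHS]
end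

section
/- Let f, g be piecewise continuous of exponential order, with Laplace-type transforms φₙ(s) = ∫₀^∞ e^{-s t}(tⁿ/n!) f(t) dt and ψₙ(s) = ∫₀^∞ e^{-s t}(tⁿ/n!) g(t) dt. Then the Laplace-type transform of the convolution (f*g)(t) = ∫₀^t f(t-τ) g(τ) dτ satisfies ∫₀^∞ e^{-s t}(tⁿ/n!)(f*g)(t) dt = Σ_{k=0}^{n} φ_{n-k}(s) ψ_k(s). -/
open MeasureTheory Real Finset

lemma aux_pow_div_le_exp {x : ℝ} (hx : 0 ≤ x) (k : ℕ) :
    x ^ k / k.factorial ≤ Real.exp x := by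
  calc x ^ k / k.factorial
      ≤ ∑ i ∈ range (k+1), x ^ i / i.factorial := by
        refine Finset.single_le_sum (f := fun i => x ^ i / (i.factorial : ℝ))
          (fun i _ => by positivity) (Finset.self_mem_range_succ k)
    _ ≤ Real.exp x := Real.sum_le_exp_of_nonneg hx _

lemma aux_bound {b t : ℝ} (hb : 0 < b) (ht : 0 ≤ t) (k : ℕ) :
    t ^ k / k.factorial ≤ Real.exp (b*t) / b ^ k := by
  have h := aux_pow_div_le_exp (x := b*t) (by positivity) k
  rw [mul_pow] at h
  have hk : (0:ℝ) < k.factorial := by positivity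
  rw [div_le_div_iff₀ hk (by positivity)]
  rw [div_le_iff₀ hk] at h
  nlinarith [h]

lemma aux_binom (u τ : ℝ) (n : ℕ) :
    (u + τ) ^ n / n.factorial
      = ∑ k ∈ range (n+1), (u ^ k / k.factorial) * (τ ^ (n-k) / (n-k).factorial) := by
  rw [add_pow, Finset.sum_div]
  refine Finset.sum_congr rfl fun k hk => ?_
  have hk' : k ≤ n := Nat.lt_succ_iff.mp (mem_range.mp hk)
  have h : ((n.choose k : ℝ)) * k.factorial * (n-k).factorial = n.factorial := by
    exact_mod_cast Nat.choose_mul_factorial_mul_factorial hk'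
  have h1 : (k.factorial:ℝ) ≠ 0 := by positivity
  have h2 : ((n-k).factorial:ℝ) ≠ 0 := by positivity
  have h3 : (n.factorial:ℝ) ≠ 0 := by positivity
  field_simp
  linear_combination (u ^ k * τ ^ (n - k)) * h

lemma aux_integrable (h : ℝ → ℝ) (M r s : ℝ) (hh : Measurable h)
    (hrs : r < s)
    (hbd : ∀ t ≥ (0:ℝ), |h t| ≤ M * Real.exp (r * t)) (k : ℕ) :
    IntegrableOn (fun t => Real.exp (-(s*t)) * (t ^ k / k.factorial) * h t) (Set.Ioi 0) := by
  set b := (s - r)/2 with hbdef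
  have hsr : 0 < s - r := sub_pos.2 hrs
  have hb0 : 0 < b := by rw [hbdef]; positivity
  have hM0 : 0 ≤ M := by
    have := hbd 0 le_rfl
    have := abs_nonneg (h 0)
    nlinarith [Real.exp_pos (r*0)]
  refine Integrable.mono' (g := fun t => (M / b ^ k) * Real.exp (-b * t))
    (((exp_neg_integrableOn_Ioi 0 hb0).const_mul _)) ?_ ?_
  · exact ((((Real.measurable_exp.comp ((measurable_const.mul measurable_id).neg)).mul
      ((measurable_id.pow_const k).div_const _)).mul hh)).aestronglyMeasurable.restrict
  · filter_upwards [ae_restrict_mem measurableSet_Ioi] with t ht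
    have ht0 : (0:ℝ) ≤ t := le_of_lt ht
    have he : (0:ℝ) < Real.exp (-(s*t)) := Real.exp_pos _
    have hp : (0:ℝ) ≤ t ^ k / k.factorial := by positivity
    have hb1 : t ^ k / k.factorial ≤ Real.exp (b*t) / b ^ k := aux_bound hb0 ht0 k
    calc ‖Real.exp (-(s*t)) * (t ^ k / k.factorial) * h t‖
        = Real.exp (-(s*t)) * (t ^ k / k.factorial) * |h t| := by
          rw [Real.norm_eq_abs, abs_mul, abs_of_nonneg (by positivity)]
      _ ≤ Real.exp (-(s*t)) * (t ^ k / k.factorial) * (M * Real.exp (r*t)) := by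
          apply mul_le_mul_of_nonneg_left (hbd t ht0) (by positivity)
      _ ≤ Real.exp (-(s*t)) * (Real.exp (b*t) / b ^ k) * (M * Real.exp (r*t)) := by
          apply mul_le_mul_of_nonneg_right (mul_le_mul_of_nonneg_left hb1 (le_of_lt he))
          positivity
      _ = (M / b ^ k) * Real.exp (-(s*t) + b*t + r*t) := by
          rw [Real.exp_add, Real.exp_add]; ring
      _ = (M / b ^ k) * Real.exp (-b * t) := by
          congr 1; congr 1; rw [hbdef]; ring

theorem laplace_type_of_convolution (f g : ℝ → ℝ) (M r : ℝ)
    (hf : Measurable f) (hg : Measurable g) (hM : 0 < M) (hr : 0 < r)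
    (hfb : ∀ t ≥ (0:ℝ), |f t| ≤ M * Real.exp (r * t))
    (hgb : ∀ t ≥ (0:ℝ), |g t| ≤ M * Real.exp (r * t))
    (φ ψ : ℕ → ℝ → ℝ)
    (hφ : ∀ n s, φ n s = ∫ t in Set.Ioi (0:ℝ),
        Real.exp (-(s*t)) * (t ^ n / n.factorial) * f t)
    (hψ : ∀ n s, ψ n s = ∫ t in Set.Ioi (0:ℝ),
        Real.exp (-(s*t)) * (t ^ n / n.factorial) * g t) :
    ∀ s > r, ∀ n : ℕ,
      (∫ t in Set.Ioi (0:ℝ), Real.exp (-(s*t)) * (t ^ n / n.factorial) *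
          (∫ τ in (0:ℝ)..t, f (t - τ) * g τ))
        = ∑ k ∈ range (n + 1), φ (n - k) s * ψ k s := by
  intro s hs n
  set S : Set (ℝ × ℝ) := {p | 0 < p.2 ∧ p.2 ≤ p.1} with hSdef
  set F : ℝ × ℝ → ℝ := fun p =>
    Real.exp (-(s*p.1)) * (p.1 ^ n / n.factorial) * (f (p.1 - p.2) * g p.2) with hFdef
  set W : ℝ × ℝ → ℝ := S.indicator F with hWdef
  have hS : MeasurableSet S :=
    (measurableSet_lt measurable_const measurable_snd).inter
      (measurableSet_le measurable_snd measurable_fst)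
  have hFm : Measurable F := by
    apply Measurable.mul
    apply Measurable.mul
    · exact Real.measurable_exp.comp ((measurable_const.mul measurable_fst).neg)
    · exact (measurable_fst.pow_const n).div_const _
    · exact (hf.comp (measurable_fst.sub measurable_snd)).mul (hg.comp measurable_snd)
  have hWm : Measurable W := hFm.indicator hS
  -- Step 0: rewrite integrand on Ioi 0
  have step0 : ∀ t ∈ Set.Ioi (0:ℝ),
      Real.exp (-(s*t)) * (t ^ n / n.factorial) * (∫ τ in (0:ℝ)..t, f (t - τ) * g τ)
        = ∫ τ : ℝ, W (t, τ) := by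
    intro t ht
    have ht' : (0:ℝ) ≤ t := le_of_lt ht
    have hsec : (fun τ => W (t, τ))
        = (Set.Ioc (0:ℝ) t).indicator
            (fun τ => Real.exp (-(s*t)) * (t ^ n / n.factorial) * (f (t - τ) * g τ)) := by
      funext τ
      simp only [hWdef, hFdef, hSdef, Set.indicator_apply, Set.mem_setOf_eq, Set.mem_Ioc]
    rw [hsec, integral_indicator measurableSet_Ioc,
      MeasureTheory.integral_const_mul, intervalIntegral.integral_of_le ht']
  rw [setIntegral_congr_fun measurableSet_Ioi step0]
  -- Step 2: extend to ℝ
  have step2 : (∫ t in Set.Ioi (0:ℝ), ∫ τ : ℝ, W (t, τ)) = ∫ t : ℝ, ∫ τ : ℝ, W (t, τ) := by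
    apply setIntegral_eq_integral_of_forall_compl_eq_zero
    intro t ht
    have : (fun τ => W (t, τ)) = fun _ => (0:ℝ) := by
      funext τ
      simp only [hWdef, Set.indicator_apply, hSdef, Set.mem_setOf_eq, ite_eq_right_iff]
      rintro ⟨h1, h2⟩
      exact absurd (lt_of_lt_of_le h1 h2) ht
    rw [this, integral_zero]
  rw [step2]
  -- Step 3: Fubini
  have hWint : Integrable W (volume.prod volume) := by
    have hsr : 0 < s - r := sub_pos.2 hs
    set b : ℝ := (s - r)/2 with hbdef
    have hb0 : 0 < b := by rw [hbdef]; positivity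
    set a : ℝ := b/2 with hadef
    have ha0 : 0 < a := by rw [hadef]; positivity
    have h1 : Integrable ((Set.Ioi (0:ℝ)).indicator (fun x => Real.exp (-a*x))) volume :=
      (integrable_indicator_iff measurableSet_Ioi).2 (exp_neg_integrableOn_Ioi 0 ha0)
    refine Integrable.mono' (g := fun p => (M^2 / b^n) *
        (((Set.Ioi (0:ℝ)).indicator (fun x => Real.exp (-a*x)) p.1) *
         ((Set.Ioi (0:ℝ)).indicator (fun x => Real.exp (-a*x)) p.2)))
      ((h1.mul_prod h1).const_mul _) hWm.aestronglyMeasurable ?_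
    apply Filter.Eventually.of_forall
    rintro ⟨t, τ⟩
    by_cases hp : (t, τ) ∈ S
    · have h1' : (0:ℝ) < τ := hp.1
      have h2' : τ ≤ t := hp.2
      have ht0 : (0:ℝ) < t := lt_of_lt_of_le h1' h2'
      simp only
      rw [hWdef, Set.indicator_of_mem hp,
        Set.indicator_of_mem (Set.mem_Ioi.2 ht0), Set.indicator_of_mem (Set.mem_Ioi.2 h1')]
      have hfτ : |f (t - τ)| ≤ M * Real.exp (r * (t - τ)) := hfb _ (by linarith)
      have hgτ : |g τ| ≤ M * Real.exp (r * τ) := hgb _ (le_of_lt h1')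
      have hM0 : (0:ℝ) ≤ M := by
        have := hgb 0 le_rfl
        have := abs_nonneg (g 0)
        nlinarith [Real.exp_pos (r*(0:ℝ))]
      have hbnd : t ^ n / n.factorial ≤ Real.exp (b*t) / b ^ n :=
        aux_bound hb0 (le_of_lt ht0) n
      calc ‖F (t, τ)‖
          = Real.exp (-(s*t)) * (t ^ n / n.factorial) * (|f (t-τ)| * |g τ|) := by
            simp only [hFdef, Real.norm_eq_abs, abs_mul,
              abs_of_nonneg (Real.exp_pos (-(s*t))).le,
              abs_of_nonneg (by positivity : (0:ℝ) ≤ t ^ n / (n.factorial:ℝ))]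
        _ ≤ Real.exp (-(s*t)) * (t ^ n / n.factorial) *
              ((M * Real.exp (r * (t - τ))) * (M * Real.exp (r * τ))) := by
            refine mul_le_mul_of_nonneg_left
              (mul_le_mul hfτ hgτ (abs_nonneg _) (by positivity)) (by positivity)
        _ = M^2 * (t ^ n / n.factorial) * Real.exp (-(s*t) + r*t) := by
            rw [Real.exp_add, show r*t = r*(t-τ) + r*τ by ring, Real.exp_add]
            ring
        _ ≤ M^2 * (Real.exp (b*t) / b ^ n) * Real.exp (-(s*t) + r*t) := by
            apply mul_le_mul_of_nonneg_right _ (Real.exp_pos _).le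
            exact mul_le_mul_of_nonneg_left hbnd (by positivity)
        _ = (M^2 / b^n) * Real.exp (-(2*a) * t) := by
            have he : b*t + (-(s*t) + r*t) = -(2*a)*t := by rw [hadef, hbdef]; ring
            rw [show M^2 * (Real.exp (b*t) / b^n) * Real.exp (-(s*t) + r*t)
                = (M^2/b^n) * (Real.exp (b*t) * Real.exp (-(s*t) + r*t)) from by ring,
              ← Real.exp_add, he]
        _ ≤ (M^2 / b^n) * (Real.exp (-a*t) * Real.exp (-a*τ)) := by
            apply mul_le_mul_of_nonneg_left _ (by positivity)
            rw [← Real.exp_add]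
            apply Real.exp_le_exp.2
            nlinarith
    · simp only
      rw [hWdef, Set.indicator_of_notMem hp]
      simp only [norm_zero]
      have : (0:ℝ) ≤ (Set.Ioi (0:ℝ)).indicator (fun x => Real.exp (-a*x)) t *
          (Set.Ioi (0:ℝ)).indicator (fun x => Real.exp (-a*x)) τ := by
        apply mul_nonneg <;>
          exact Set.indicator_nonneg (fun x _ => (Real.exp_pos _).le) _
      positivity
  have step3 : (∫ t : ℝ, ∫ τ : ℝ, W (t, τ)) = ∫ τ : ℝ, ∫ t : ℝ, W (t, τ) :=
    integral_integral_swap hWint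
  rw [step3]
  -- Step 4: restrict outer to Ioi 0
  have step4 : (∫ τ : ℝ, ∫ t : ℝ, W (t, τ)) = ∫ τ in Set.Ioi (0:ℝ), ∫ t : ℝ, W (t, τ) := by
    symm
    apply setIntegral_eq_integral_of_forall_compl_eq_zero
    intro τ hτ
    have : (fun t => W (t, τ)) = fun _ => (0:ℝ) := by
      funext t
      simp only [hWdef, Set.indicator_apply, hSdef, Set.mem_setOf_eq, ite_eq_right_iff]
      rintro ⟨h1, h2⟩
      exact absurd h1 (by simpa using hτ)
    rw [this, integral_zero]
  rw [step4]
  -- Step 5: inner integral evaluation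
  have step5 : ∀ τ ∈ Set.Ioi (0:ℝ),
      (∫ t : ℝ, W (t, τ))
        = ∑ k ∈ range (n+1), φ k s *
            (Real.exp (-(s*τ)) * (τ ^ (n-k) / (n-k).factorial) * g τ) := by
    intro τ hτ
    have hτ0 : (0:ℝ) < τ := hτ
    rw [← integral_add_right_eq_self (fun t => W (t, τ)) τ]
    have hsec : (fun u => W (u + τ, τ))
        = (Set.Ici (0:ℝ)).indicator (fun u => F (u + τ, τ)) := by
      funext u
      simp only [hWdef, Set.indicator_apply, hSdef, Set.mem_setOf_eq, Set.mem_Ici,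
        hτ0, true_and, le_add_iff_nonneg_left]
    rw [hsec, integral_indicator measurableSet_Ici, integral_Ici_eq_integral_Ioi]
    have hexp : ∀ u ∈ Set.Ioi (0:ℝ), F (u + τ, τ)
        = ∑ k ∈ range (n+1), (Real.exp (-(s*u)) * (u ^ k / k.factorial) * f u) *
            (Real.exp (-(s*τ)) * (τ ^ (n-k) / (n-k).factorial) * g τ) := by
      intro u _
      simp only [hFdef, add_sub_cancel_right]
      rw [show -(s*(u+τ)) = -(s*u) + -(s*τ) by ring, Real.exp_add, aux_binom u τ n,
        Finset.mul_sum, Finset.sum_mul]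
      exact Finset.sum_congr rfl fun k _ => by ring
    rw [setIntegral_congr_fun measurableSet_Ioi hexp,
      MeasureTheory.integral_finset_sum]
    · refine Finset.sum_congr rfl fun k _ => ?_
      rw [MeasureTheory.integral_mul_const, hφ]
    · intro k _
      exact (aux_integrable f M r s hf hs hfb k).mul_const _
  rw [setIntegral_congr_fun measurableSet_Ioi step5]
  -- Step 6: exchange sum and integral
  have step6 : (∫ τ in Set.Ioi (0:ℝ), ∑ k ∈ range (n+1), φ k s *
        (Real.exp (-(s*τ)) * (τ ^ (n-k) / (n-k).factorial) * g τ))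
      = ∑ k ∈ range (n+1), φ k s * ψ (n-k) s := by
    rw [MeasureTheory.integral_finset_sum]
    · refine Finset.sum_congr rfl fun k _ => ?_
      rw [MeasureTheory.integral_const_mul, hψ]
    · intro k _
      exact (aux_integrable g M r s hg hs hgb (n-k)).const_mul _
  rw [step6]
  -- Step 7: reindex
  have := Finset.sum_range_reflect (fun k => φ (n - k) s * ψ k s) (n+1)
  rw [← this]
  refine Finset.sum_congr rfl fun k hk => ?_
  have hk' : k ≤ n := Nat.lt_succ_iff.mp (mem_range.mp hk)
  simp [Nat.sub_sub_self hk']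
end

section
/- Let f be of exponential order, φₙ(s) = ∫₀^∞ e^{-s x}(xⁿ/n!) f(x) dx, and aₙ(s) = (-1)ⁿ ∫₀^∞ e^{-s x} f(x) √s · Lₙ(s x) dx the Laguerre–Fourier coefficients of f. Then aₙ(s) = Σ_{k=0}^{n} (-1)^{n-k} C(n,k) s^{k+1/2} φ_k(s). -/
open MeasureTheory Real Finset

/-- The classical Laguerre polynomial. -/
noncomputable def laguerre (n : ℕ) (x : ℝ) : ℝ :=
  ∑ k ∈ range (n + 1), (-1:ℝ) ^ k * (n.choose k : ℝ) * x ^ k / k.factorial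

theorem laguerre_coeff_eq_sum_laplace_type (f : ℝ → ℝ) (M r : ℝ)
    (hf : Measurable f) (hM : 0 < M) (hr : 0 < r)
    (hbound : ∀ x ≥ (0:ℝ), |f x| ≤ M * Real.exp (r * x))
    (φ a : ℕ → ℝ → ℝ)
    (hφ : ∀ n s, φ n s = ∫ x in Set.Ioi (0:ℝ),
        Real.exp (-(s*x)) * (x ^ n / n.factorial) * f x)
    (ha : ∀ n s, a n s = (-1:ℝ) ^ n * ∫ x in Set.Ioi (0:ℝ),
        Real.exp (-(s*x)) * f x * (Real.sqrt s * laguerre n (s * x))) :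
    ∀ s > r, ∀ n : ℕ,
      a n s = ∑ k ∈ range (n + 1),
        (-1:ℝ) ^ (n - k) * (n.choose k : ℝ) * s ^ k * Real.sqrt s * φ k s := by
  intro s hs n
  -- integrability of x ↦ exp(-(s*x)) * x^k * f x on Ioi 0
  have key : ∀ k : ℕ, IntegrableOn (fun x => Real.exp (-(s*x)) * x ^ k * f x)
      (Set.Ioi (0:ℝ)) := by
    intro k
    have hmaj : IntegrableOn (fun x : ℝ => M * (x ^ (k:ℝ) * Real.exp (-(s - r) * x)))
        (Set.Ioi (0:ℝ)) := by
      have h0 : IntegrableOn (fun x : ℝ => M * (x ^ (k:ℝ) * Real.exp (-(s - r) * x ^ (1:ℝ))))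
          (Set.Ioi (0:ℝ)) :=
        (integrableOn_rpow_mul_exp_neg_mul_rpow (p := 1) (s := (k:ℝ)) (b := s - r)
          (lt_of_lt_of_le neg_one_lt_zero (Nat.cast_nonneg k)) one_pos (by linarith)).const_mul M
      refine h0.congr_fun (fun x hx => ?_) measurableSet_Ioi
      simp [Real.rpow_one]
    refine Integrable.mono' hmaj ?_ ?_
    · exact ((Real.measurable_exp.comp (measurable_const.mul measurable_id).neg).mul
        (measurable_id.pow_const k)).mul hf |>.aestronglyMeasurable
    · refine (ae_restrict_iff' measurableSet_Ioi).2 (Filter.Eventually.of_forall ?_)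
      intro x hx
      have hx0 : (0:ℝ) < x := hx
      have hb := hbound x hx0.le
      have h1 : |Real.exp (-(s*x)) * x ^ k * f x|
          = Real.exp (-(s*x)) * x ^ k * |f x| := by
        rw [abs_mul, abs_of_nonneg (by positivity)]
      rw [Real.norm_eq_abs, h1]
      have : Real.exp (-(s*x)) * x ^ k * |f x|
          ≤ Real.exp (-(s*x)) * x ^ k * (M * Real.exp (r*x)) := by
        apply mul_le_mul_of_nonneg_left hb (by positivity)
      refine this.trans (le_of_eq ?_)
      rw [show -(s-r)*x = -(s*x) + r*x by ring, Real.exp_add, Real.rpow_natCast]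
      ring
  rw [ha]
  have hint : ∀ x ∈ Set.Ioi (0:ℝ),
      Real.exp (-(s*x)) * f x * (Real.sqrt s * laguerre n (s * x))
      = ∑ k ∈ range (n + 1),
          ((-1:ℝ) ^ k * (n.choose k : ℝ) * s ^ k * Real.sqrt s / k.factorial)
            * (Real.exp (-(s*x)) * x ^ k * f x) := by
    intro x _
    rw [laguerre, Finset.mul_sum, Finset.mul_sum]
    refine Finset.sum_congr rfl fun k _ => ?_
    rw [mul_pow]
    ring
  rw [setIntegral_congr_fun measurableSet_Ioi hint]
  rw [integral_finset_sum _ (fun k _ => ((key k).const_mul _))]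
  rw [Finset.mul_sum]
  refine Finset.sum_congr rfl fun k hk => ?_
  rw [MeasureTheory.integral_const_mul]
  have hφk : φ k s = (1 / (k.factorial : ℝ)) * ∫ x in Set.Ioi (0:ℝ),
      Real.exp (-(s*x)) * x ^ k * f x := by
    rw [hφ, ← MeasureTheory.integral_const_mul]
    refine setIntegral_congr_fun measurableSet_Ioi fun x _ => ?_
    ring
  rw [hφk]
  have hsign : (-1:ℝ) ^ n * (-1:ℝ) ^ k = (-1:ℝ) ^ (n - k) := by
    have hkn : k ≤ n := Nat.lt_succ_iff.mp (Finset.mem_range.mp hk)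
    have h1 : (-1:ℝ) ^ (n - k) * (-1:ℝ) ^ k = (-1:ℝ) ^ n := by
      rw [← pow_add]; congr 1; omega
    have h2 : (-1:ℝ) ^ k * (-1:ℝ) ^ k = 1 := by
      rw [← pow_add]; exact Even.neg_one_pow ⟨k, rfl⟩
    rw [← h1, mul_assoc, h2, mul_one]
  rw [← hsign]
  ring
end

section
/- Let f be of exponential order r and φₙ(s) = ∫₀^∞ e^{-s x}(xⁿ/n!) f(x) dx. Then for s > 2r, for every k, the k-th forward difference at n = 0 of the sequence n ↦ sⁿ φₙ(s) satisfies Δ^k(sⁿφₙ(s))|_{n=0} = Σ_{j=0}^{k} (-1)^{k-j} C(k,j) s^j φ_j(s) = a_k(s)/√s, and consequently Σ_{k=0}^∞ (Δ^k(sⁿφₙ(s))|_{n=0})² ≤ (1/s)∫₀^∞ e^{-s x}|f(x)|² dx < ∞. -/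
open MeasureTheory Real Finset

/-- Forward difference operator on sequences. -/
def fwd (g : ℕ → ℝ) : ℕ → ℝ := fun n => g (n + 1) - g n

section Aux
open Set

private def Wg (n i d : ℕ) : ℕ → ℝ := fun j => (-1:ℝ)^j * (n.choose j) * ((i+j).choose d)

private lemma lemW (n : ℕ) : ∀ i d : ℕ, ∑ j ∈ range (n+1), Wg n i d j
    = (-1)^n * (if n ≤ d then ((i.choose (d-n)):ℝ) else 0) := by
  induction n with
  | zero => intro i d; simp [Wg]
  | succ n IH =>
    intro i d
    have e1 := Finset.sum_range_succ' (Wg n i d) (n+1)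
    have e2 := Finset.sum_range_succ (Wg n i d) (n+1)
    have e3 : Wg n i d (n+1) = 0 := by simp [Wg, Nat.choose_succ_self]
    have h2 : ∑ j ∈ range (n+1), Wg n i d (j+1)
        = (∑ j ∈ range (n+1), Wg n i d j) - Wg n i d 0 := by
      rw [e3, add_zero] at e2; rw [e2] at e1; linarith
    have key : ∑ j ∈ range (n+2), Wg (n+1) i d j
        = (∑ j ∈ range (n+1), Wg n i d j) - ∑ j ∈ range (n+1), Wg n (i+1) d j := by
      rw [Finset.sum_range_succ' (Wg (n+1) i d) (n+1)]
      have h1 : ∀ j ∈ range (n+1), Wg (n+1) i d (j+1) = Wg n i d (j+1) - Wg n (i+1) d j := by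
        intro j _
        simp only [Wg, Nat.choose_succ_succ]
        have : i + (j+1) = (i+1) + j := by ring
        rw [this]
        push_cast
        ring
      rw [Finset.sum_congr rfl h1, Finset.sum_sub_distrib, h2]
      have h0 : Wg (n+1) i d 0 = Wg n i d 0 := by simp [Wg]
      rw [h0]; ring
    rw [key, IH, IH]
    by_cases hle : n + 1 ≤ d
    · have hn : n ≤ d := le_of_lt hle
      rw [if_pos hle, if_pos hn, if_pos hn]
      have hd : d - n = (d - (n+1)) + 1 := by omega
      rw [hd, Nat.choose_succ_succ]
      push_cast
      ring
    · by_cases h2' : n ≤ d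
      · have : n = d := by omega
        subst this
        simp [hle, Nat.sub_self]
      · simp [hle, h2']

private lemma lemS (m n : ℕ) :
    ∑ i ∈ range (m+1), ∑ j ∈ range (n+1),
      ((-1:ℝ)^i * (m.choose i)) * ((-1:ℝ)^j * (n.choose j)) * ((i+j).choose i)
    = if m = n then 1 else 0 := by
  have inner : ∀ i : ℕ, ∑ j ∈ range (n+1),
      ((-1:ℝ)^i * (m.choose i)) * ((-1:ℝ)^j * (n.choose j)) * ((i+j).choose i)
      = ((-1:ℝ)^i * (m.choose i)) * ((-1:ℝ)^n * (i.choose n)) := by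
    intro i
    have := lemW n i i
    have hW : ∑ j ∈ range (n+1), Wg n i i j = (-1:ℝ)^n * (i.choose n) := by
      rw [this]
      by_cases h : n ≤ i
      · rw [if_pos h, Nat.choose_symm h]
      · rw [if_neg h, Nat.choose_eq_zero_of_lt (by omega)]
        simp
    calc ∑ j ∈ range (n+1),
        ((-1:ℝ)^i * (m.choose i)) * ((-1:ℝ)^j * (n.choose j)) * ((i+j).choose i)
        = ((-1:ℝ)^i * (m.choose i)) * ∑ j ∈ range (n+1), Wg n i i j := by
          rw [Finset.mul_sum]
          refine Finset.sum_congr rfl fun j _ => ?_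
          simp [Wg]; ring
      _ = _ := by rw [hW]
  rw [Finset.sum_congr rfl fun i _ => inner i]
  have : ∑ i ∈ range (m+1), ((-1:ℝ)^i * (m.choose i)) * ((-1:ℝ)^n * (i.choose n))
      = (-1:ℝ)^n * ∑ i ∈ range (m+1), Wg m 0 n i := by
    rw [Finset.mul_sum]
    refine Finset.sum_congr rfl fun i _ => ?_
    simp [Wg]; ring
  rw [this, lemW m 0 n]
  by_cases h : m ≤ n
  · rw [if_pos h]
    by_cases h2 : m = n
    · subst h2; simp [Nat.sub_self, ← pow_add]
    · rw [if_neg h2, Nat.choose_eq_zero_of_lt (by omega)]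
      simp
  · rw [if_neg h, if_neg (by omega)]
    ring

private lemma my_integrable_exp_pow {c : ℝ} (hc : 0 < c) (n : ℕ) :
    IntegrableOn (fun x : ℝ => Real.exp (-(c*x)) * x ^ n) (Set.Ioi 0) := by
  apply integrable_of_isBigO_exp_neg (half_pos hc) (a := 0)
  · exact ((Real.continuous_exp.comp (by continuity)).mul (continuous_pow n)).continuousOn
  · have h : Filter.Tendsto (fun x:ℝ => x ^ (n:ℝ) * Real.exp (-(c/2) * x)) Filter.atTop (nhds 0) :=
      tendsto_rpow_mul_exp_neg_mul_atTop_nhds_zero n (c/2) (half_pos hc)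
    have hO : (fun x:ℝ => x ^ (n:ℝ) * Real.exp (-(c/2) * x)) =O[Filter.atTop]
        (fun _ => (1:ℝ)) := h.isBigO_one ℝ
    have := hO.mul (Asymptotics.isBigO_refl (fun x : ℝ => Real.exp (-(c/2) * x)) Filter.atTop)
    refine this.congr (fun x => ?_) (fun x => by rw [one_mul]) |>.trans ?_
    · rw [Real.rpow_natCast, mul_assoc, ← Real.exp_add,
        show -(c/2)*x + -(c/2)*x = -(c*x) by ring]
      ring
    · exact Asymptotics.isBigO_refl _ _

private lemma my_integral_exp_pow {c : ℝ} (hc : 0 < c) (n : ℕ) :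
    ∫ x in Set.Ioi (0:ℝ), Real.exp (-(c*x)) * x ^ n = n.factorial / c ^ (n+1) := by
  have h := Real.integral_rpow_mul_exp_neg_mul_Ioi (a := (n:ℝ)+1) (by positivity) hc
  rw [show ((n:ℝ)+1) - 1 = (n:ℝ) by ring] at h
  have h2 : ∫ t in Set.Ioi (0:ℝ), t ^ (n:ℝ) * Real.exp (-(c*t))
      = ∫ t in Set.Ioi (0:ℝ), Real.exp (-(c*t)) * t ^ n := by
    refine setIntegral_congr_fun measurableSet_Ioi (fun t _ => ?_)
    rw [Real.rpow_natCast]; ring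
  rw [h2] at h
  rw [h]
  rw [show ((n:ℝ)+1) = ((n+1 : ℕ):ℝ) by push_cast; ring, Real.rpow_natCast]
  rw [show ((((n+1):ℕ)):ℝ) = (n:ℝ)+1 by push_cast; ring, Real.Gamma_nat_eq_factorial]
  rw [div_pow, one_pow]
  ring

private lemma lag_expand2 {s : ℝ} (k l : ℕ) (x : ℝ) :
    Real.exp (-(s*x)) * (s * laguerre k (s*x) * laguerre l (s*x))
    = ∑ i ∈ range (k+1), ∑ j ∈ range (l+1),
      (((-1:ℝ)^i * (k.choose i) * s^i / i.factorial)
        * ((-1:ℝ)^j * (l.choose j) * s^j / j.factorial) * s)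
        * (Real.exp (-(s*x)) * x^(i+j)) := by
  rw [laguerre, laguerre, mul_assoc s, Finset.sum_mul_sum]
  simp only [Finset.mul_sum]
  refine Finset.sum_congr rfl fun i _ => Finset.sum_congr rfl fun j _ => ?_
  rw [mul_pow, mul_pow, pow_add]
  ring

private lemma ortho {s : ℝ} (hs : 0 < s) (k l : ℕ) :
    ∫ x in Set.Ioi (0:ℝ), Real.exp (-(s*x)) * (s * laguerre k (s*x) * laguerre l (s*x))
    = if k = l then 1 else 0 := by
  have base : ∀ m : ℕ, IntegrableOn (fun x:ℝ => Real.exp (-(s*x)) * x ^ m) (Set.Ioi 0) :=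
    my_integrable_exp_pow hs
  rw [setIntegral_congr_fun measurableSet_Ioi (fun x _ => lag_expand2 k l x)]
  rw [integral_finset_sum _ (fun i _ => integrable_finset_sum _
    (fun j _ => ((base (i+j)).const_mul _)))]
  rw [Finset.sum_congr rfl (fun i _ => integral_finset_sum _
    (fun j _ => ((base (i+j)).const_mul _)))]
  have hval : ∀ i j : ℕ,
      (∫ x in Set.Ioi (0:ℝ), (((-1:ℝ)^i * (k.choose i) * s^i / i.factorial)
        * ((-1:ℝ)^j * (l.choose j) * s^j / j.factorial) * s)
        * (Real.exp (-(s*x)) * x^(i+j)))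
      = ((-1:ℝ)^i * (k.choose i)) * ((-1:ℝ)^j * (l.choose j)) * ((i+j).choose i) := by
    intro i j
    rw [integral_const_mul, my_integral_exp_pow hs (i+j)]
    have hfact : (((i+j).factorial : ℕ) : ℝ)
        = (((i+j).choose i : ℕ) : ℝ) * (i.factorial : ℝ) * (j.factorial : ℝ) := by
      rw_mod_cast [← Nat.choose_mul_factorial_mul_factorial (Nat.le_add_right i j)]
      simp [Nat.add_sub_cancel_left]
    rw [hfact]
    have h1 : (i.factorial : ℝ) ≠ 0 := Nat.cast_ne_zero.mpr i.factorial_ne_zero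
    have h2 : (j.factorial : ℝ) ≠ 0 := Nat.cast_ne_zero.mpr j.factorial_ne_zero
    have h3 : s ≠ 0 := ne_of_gt hs
    field_simp
    ring
  rw [Finset.sum_congr rfl (fun i _ => Finset.sum_congr rfl (fun j _ => hval i j))]
  exact lemS k l

private lemma lag_expand1 (s : ℝ) (f : ℝ → ℝ) (k : ℕ) (x : ℝ) :
    Real.exp (-(s*x)) * f x * laguerre k (s*x)
    = ∑ i ∈ range (k+1), ((-1:ℝ)^i * (k.choose i) * s^i / i.factorial)
        * (Real.exp (-(s*x)) * x^i * f x) := by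
  rw [laguerre, Finset.mul_sum]
  refine Finset.sum_congr rfl fun i _ => ?_
  rw [mul_pow]
  ring

private lemma fwd_eq : fwd = fwdDiff (1:ℕ) (G := ℝ) := rfl

private lemma fwd_iter (g : ℕ → ℝ) (k : ℕ) :
    fwd^[k] g 0 = ∑ j ∈ range (k+1), (-1:ℝ)^(k-j) * (k.choose j) * g j := by
  rw [fwd_eq, fwdDiff_iter_eq_sum_shift]
  refine Finset.sum_congr rfl fun j _ => ?_
  have : (0 : ℕ) + j • (1:ℕ) = j := by simp
  rw [this, zsmul_eq_mul]
  push_cast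
  ring

private lemma bessel_expand (e fx : ℝ) (N : ℕ) (c v : ℕ → ℝ) :
    e * (fx - ∑ k ∈ range N, c k * v k)^2
    = e * fx^2 - (∑ k ∈ range N, (2 * c k) * (e * fx * v k))
      + ∑ k ∈ range N, ∑ l ∈ range N, (c k * c l) * (e * v k * v l) := by
  have hA : 2*(e*fx*(∑ k ∈ range N, c k * v k)) = ∑ k ∈ range N, (2*c k)*(e*fx*v k) := by
    rw [Finset.mul_sum, Finset.mul_sum]
    exact Finset.sum_congr rfl fun k _ => by ring
  have hB : e*((∑ k ∈ range N, c k * v k)*(∑ l ∈ range N, c l * v l))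
      = ∑ k ∈ range N, ∑ l ∈ range N, (c k * c l) * (e * v k * v l) := by
    rw [Finset.sum_mul_sum, Finset.mul_sum]
    refine Finset.sum_congr rfl fun k _ => ?_
    rw [Finset.mul_sum]
    exact Finset.sum_congr rfl fun l _ => by ring
  calc e * (fx - ∑ k ∈ range N, c k * v k)^2
      = e*fx^2 - 2*(e*fx*(∑ k ∈ range N, c k * v k))
        + e*((∑ k ∈ range N, c k * v k)*(∑ l ∈ range N, c l * v l)) := by ring
    _ = _ := by rw [hA, hB]

end Aux

theorem laplace_type_seq_in_Sc (f : ℝ → ℝ) (M r s : ℝ)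
    (hf : Measurable f) (hM : 0 < M) (hr : 0 < r)
    (hbound : ∀ x ≥ (0:ℝ), |f x| ≤ M * Real.exp (r * x))
    (hs : 2 * r < s)
    (φ a : ℕ → ℝ → ℝ)
    (hφ : ∀ n, φ n s = ∫ x in Set.Ioi (0:ℝ),
        Real.exp (-(s*x)) * (x ^ n / n.factorial) * f x)
    (ha : ∀ k, a k s = (-1:ℝ) ^ k * Real.sqrt s * ∫ x in Set.Ioi (0:ℝ),
        Real.exp (-(s*x)) * f x * laguerre k (s * x)) :
    (∀ k : ℕ,
      fwd^[k] (fun n => s ^ n * φ n s) 0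
        = ∑ j ∈ range (k + 1), (-1:ℝ) ^ (k - j) * (k.choose j : ℝ) * s ^ j * φ j s
      ∧ fwd^[k] (fun n => s ^ n * φ n s) 0 = a k s / Real.sqrt s) ∧
    Summable (fun k : ℕ => (fwd^[k] (fun n => s ^ n * φ n s) 0) ^ 2) ∧
    (∑' k : ℕ, (fwd^[k] (fun n => s ^ n * φ n s) 0) ^ 2)
      ≤ (1 / s) * ∫ x in Set.Ioi (0:ℝ), Real.exp (-(s*x)) * (f x) ^ 2 := by

  have hs0 : 0 < s := by linarith
  have hsr : 0 < s - r := by linarith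
  have hs2r : 0 < s - 2*r := by linarith
  have hsqne : Real.sqrt s ≠ 0 := by positivity
  -- integrability of exp * x^n * f
  have h_int_pf : ∀ n : ℕ,
      IntegrableOn (fun x:ℝ => Real.exp (-(s*x)) * x^n * f x) (Set.Ioi 0) := by
    intro n
    apply Integrable.mono' (((my_integrable_exp_pow hsr n).const_mul M))
    · exact (((Real.measurable_exp.comp ((measurable_const.mul measurable_id).neg)).mul
        (measurable_id.pow_const n)).mul hf).aestronglyMeasurable
    · rw [ae_restrict_iff' measurableSet_Ioi]
      refine Filter.Eventually.of_forall (fun x hx => ?_)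
      have hx0 : (0:ℝ) ≤ x := le_of_lt hx
      have hb := hbound x hx0
      have hxn : (0:ℝ) ≤ x ^ n := pow_nonneg hx0 n
      have habs : ‖Real.exp (-(s*x)) * x^n * f x‖ = Real.exp (-(s*x)) * x^n * |f x| := by
        rw [Real.norm_eq_abs, abs_mul, abs_mul, abs_of_nonneg (Real.exp_pos _).le,
          abs_of_nonneg hxn]
      rw [habs]
      have step1 : Real.exp (-(s*x)) * x^n * |f x|
          ≤ Real.exp (-(s*x)) * x^n * (M * Real.exp (r*x)) := by
        apply mul_le_mul_of_nonneg_left hb (by positivity)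
      refine step1.trans (le_of_eq ?_)
      have hexp : Real.exp (-(s*x)) * Real.exp (r*x) = Real.exp (-((s-r)*x)) := by
        rw [← Real.exp_add]; ring_nf
      calc Real.exp (-(s*x)) * x^n * (M * Real.exp (r*x))
          = M * ((Real.exp (-(s*x)) * Real.exp (r*x)) * x^n) := by ring
        _ = M * (Real.exp (-((s-r)*x)) * x^n) := by rw [hexp]
  -- integrability of exp * f^2
  have h_int_f2 : IntegrableOn (fun x:ℝ => Real.exp (-(s*x)) * f x ^ 2) (Set.Ioi 0) := by
    apply Integrable.mono' (((my_integrable_exp_pow hs2r 0).const_mul (M^2)))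
    · exact ((Real.measurable_exp.comp ((measurable_const.mul measurable_id).neg)).mul
        (hf.pow_const 2)).aestronglyMeasurable
    · rw [ae_restrict_iff' measurableSet_Ioi]
      refine Filter.Eventually.of_forall (fun x hx => ?_)
      have hx0 : (0:ℝ) ≤ x := le_of_lt hx
      have hb := hbound x hx0
      have habs : ‖Real.exp (-(s*x)) * f x ^ 2‖ = Real.exp (-(s*x)) * f x ^ 2 := by
        rw [Real.norm_eq_abs, abs_of_nonneg (by positivity)]
      rw [habs]
      have hf2 : f x ^ 2 ≤ (M * Real.exp (r*x))^2 := by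
        rw [← sq_abs]
        exact pow_le_pow_left₀ (abs_nonneg _) hb 2
      have step1 : Real.exp (-(s*x)) * f x ^ 2
          ≤ Real.exp (-(s*x)) * (M * Real.exp (r*x))^2 :=
        mul_le_mul_of_nonneg_left hf2 (Real.exp_pos _).le
      refine step1.trans (le_of_eq ?_)
      have hexp : Real.exp (-(s*x)) * (Real.exp (r*x))^2 = Real.exp (-((s-2*r)*x)) := by
        rw [sq, ← Real.exp_add, ← Real.exp_add]; ring_nf
      calc Real.exp (-(s*x)) * (M * Real.exp (r*x))^2
          = M^2 * (Real.exp (-(s*x)) * (Real.exp (r*x))^2) := by ring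
        _ = M^2 * (Real.exp (-((s-2*r)*x)) * x ^ 0) := by rw [hexp, pow_zero, mul_one]
  -- integrability of exp * f * laguerre
  have h_int_Lf : ∀ k : ℕ,
      IntegrableOn (fun x:ℝ => Real.exp (-(s*x)) * f x * laguerre k (s*x)) (Set.Ioi 0) := by
    intro k
    exact (integrable_finset_sum _ fun i _ => ((h_int_pf i).const_mul _)).congr
      (Filter.Eventually.of_forall fun x => (lag_expand1 s f k x).symm)
  -- integrability of exp * (s * laguerre * laguerre)
  have h_int_LL : ∀ k l : ℕ,
      IntegrableOn (fun x:ℝ => Real.exp (-(s*x)) * (s * laguerre k (s*x) * laguerre l (s*x)))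
        (Set.Ioi 0) := by
    intro k l
    exact (integrable_finset_sum _ fun i _ => integrable_finset_sum _ fun j _ =>
      ((my_integrable_exp_pow hs0 (i+j)).const_mul _)).congr
      (Filter.Eventually.of_forall fun x => (lag_expand2 k l x).symm)
  -- the orthonormal system
  set u : ℕ → ℝ → ℝ := fun k x => (-1:ℝ)^k * Real.sqrt s * laguerre k (s*x) with hu
  have h_uf_eq : ∀ (k : ℕ) (x : ℝ), Real.exp (-(s*x)) * f x * u k x
      = ((-1:ℝ)^k * Real.sqrt s) * (Real.exp (-(s*x)) * f x * laguerre k (s*x)) := by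
    intro k x; simp only [hu]; ring
  have h_int_uf : ∀ k : ℕ,
      IntegrableOn (fun x:ℝ => Real.exp (-(s*x)) * f x * u k x) (Set.Ioi 0) := by
    intro k
    exact (((h_int_Lf k).const_mul _)).congr
      (Filter.Eventually.of_forall fun x => (h_uf_eq k x).symm)
  have h_a : ∀ k : ℕ, a k s = ∫ x in Set.Ioi (0:ℝ), Real.exp (-(s*x)) * f x * u k x := by
    intro k
    rw [ha k, ← integral_const_mul]
    exact (setIntegral_congr_fun measurableSet_Ioi fun x _ => (h_uf_eq k x)).symm
  have h_uu_eq : ∀ (k l : ℕ) (x : ℝ), Real.exp (-(s*x)) * u k x * u l x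
      = ((-1:ℝ)^(k+l))
        * (Real.exp (-(s*x)) * (s * laguerre k (s*x) * laguerre l (s*x))) := by
    intro k l x
    have h := Real.mul_self_sqrt hs0.le
    simp only [hu]
    rw [pow_add]
    calc Real.exp (-(s*x)) * ((-1:ℝ)^k * Real.sqrt s * laguerre k (s*x))
          * ((-1:ℝ)^l * Real.sqrt s * laguerre l (s*x))
        = (-1:ℝ)^k * (-1:ℝ)^l * ((Real.sqrt s * Real.sqrt s)
            * (Real.exp (-(s*x)) * (laguerre k (s*x) * laguerre l (s*x)))) := by ring
      _ = _ := by rw [h]; ring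
  have h_int_uu : ∀ k l : ℕ,
      IntegrableOn (fun x:ℝ => Real.exp (-(s*x)) * u k x * u l x) (Set.Ioi 0) := by
    intro k l
    exact (((h_int_LL k l).const_mul _)).congr
      (Filter.Eventually.of_forall fun x => (h_uu_eq k l x).symm)
  have h_ortho_u : ∀ k l : ℕ,
      (∫ x in Set.Ioi (0:ℝ), Real.exp (-(s*x)) * u k x * u l x)
      = if k = l then 1 else 0 := by
    intro k l
    have : (∫ x in Set.Ioi (0:ℝ), Real.exp (-(s*x)) * u k x * u l x)
        = (-1:ℝ)^(k+l) * ∫ x in Set.Ioi (0:ℝ),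
            Real.exp (-(s*x)) * (s * laguerre k (s*x) * laguerre l (s*x)) := by
      rw [← integral_const_mul]
      exact setIntegral_congr_fun measurableSet_Ioi fun x _ => h_uu_eq k l x
    rw [this, ortho hs0 k l]
    by_cases h : k = l
    · subst h; simp [← two_mul, pow_mul]
    · simp [h]
  -- part 1
  have part1 : ∀ k : ℕ,
      fwd^[k] (fun n => s ^ n * φ n s) 0
        = ∑ j ∈ range (k + 1), (-1:ℝ) ^ (k - j) * (k.choose j : ℝ) * s ^ j * φ j s
      ∧ fwd^[k] (fun n => s ^ n * φ n s) 0 = a k s / Real.sqrt s := by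
    intro k
    have e1 : fwd^[k] (fun n => s ^ n * φ n s) 0
        = ∑ j ∈ range (k + 1), (-1:ℝ) ^ (k - j) * (k.choose j : ℝ) * s ^ j * φ j s := by
      rw [fwd_iter]
      exact Finset.sum_congr rfl fun j _ => by ring
    refine ⟨e1, ?_⟩
    rw [e1, ha k]
    have h_intLf_val : (∫ x in Set.Ioi (0:ℝ), Real.exp (-(s*x)) * f x * laguerre k (s*x))
        = ∑ j ∈ range (k+1), ((-1:ℝ)^j * (k.choose j) * s^j / j.factorial)
            * ∫ x in Set.Ioi (0:ℝ), Real.exp (-(s*x)) * x^j * f x := by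
      rw [setIntegral_congr_fun measurableSet_Ioi (fun x _ => lag_expand1 s f k x),
        integral_finset_sum _ (fun j _ => (h_int_pf j).const_mul _)]
      exact Finset.sum_congr rfl fun j _ => integral_const_mul _ _
    rw [h_intLf_val]
    have hdiv : (-1:ℝ)^k * Real.sqrt s
        * (∑ j ∈ range (k+1), ((-1:ℝ)^j * (k.choose j) * s^j / j.factorial)
            * ∫ x in Set.Ioi (0:ℝ), Real.exp (-(s*x)) * x^j * f x) / Real.sqrt s
        = (-1:ℝ)^k * (∑ j ∈ range (k+1), ((-1:ℝ)^j * (k.choose j) * s^j / j.factorial)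
            * ∫ x in Set.Ioi (0:ℝ), Real.exp (-(s*x)) * x^j * f x) := by
      field_simp
    rw [hdiv, Finset.mul_sum]
    refine Finset.sum_congr rfl fun j hj => ?_
    have hj' : j ≤ k := by
      have := Finset.mem_range.mp hj; omega
    have hφI : φ j s = (1 / (j.factorial:ℝ))
        * ∫ x in Set.Ioi (0:ℝ), Real.exp (-(s*x)) * x^j * f x := by
      rw [hφ j, ← integral_const_mul]
      exact setIntegral_congr_fun measurableSet_Ioi fun x _ => by ring
    rw [hφI]
    have hsign : (-1:ℝ)^(k-j) = (-1:ℝ)^k * (-1:ℝ)^j := by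
      rw [← pow_add, show k + j = (k - j) + 2*j by omega, pow_add, pow_mul]
      norm_num
    rw [hsign]
    ring
  -- Bessel partial sums
  have key : ∀ N : ℕ, ∑ k ∈ range N, (a k s)^2
      ≤ ∫ x in Set.Ioi (0:ℝ), Real.exp (-(s*x)) * (f x)^2 := by
    intro N
    have hB_int : Integrable (fun x:ℝ => ∑ k ∈ range N,
        (2 * a k s) * (Real.exp (-(s*x)) * f x * u k x))
        (volume.restrict (Set.Ioi 0)) :=
      integrable_finset_sum _ fun k _ => ((h_int_uf k).const_mul _)
    have hC_int : Integrable (fun x:ℝ => ∑ k ∈ range N, ∑ l ∈ range N,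
        (a k s * a l s) * (Real.exp (-(s*x)) * u k x * u l x))
        (volume.restrict (Set.Ioi 0)) :=
      integrable_finset_sum _ fun k _ => integrable_finset_sum _ fun l _ =>
        ((h_int_uu k l).const_mul _)
    have h0 : 0 ≤ ∫ x in Set.Ioi (0:ℝ),
        Real.exp (-(s*x)) * (f x - ∑ k ∈ range N, a k s * u k x)^2 :=
      setIntegral_nonneg measurableSet_Ioi fun x _ => by positivity
    have hcomp : (∫ x in Set.Ioi (0:ℝ),
        Real.exp (-(s*x)) * (f x - ∑ k ∈ range N, a k s * u k x)^2)
        = (∫ x in Set.Ioi (0:ℝ), Real.exp (-(s*x)) * (f x)^2)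
          - ∑ k ∈ range N, (a k s)^2 := by
      have hAB_int : Integrable (fun x:ℝ => Real.exp (-(s*x)) * f x ^ 2
          - ∑ k ∈ range N, (2 * a k s) * (Real.exp (-(s*x)) * f x * u k x))
          (volume.restrict (Set.Ioi 0)) := h_int_f2.sub hB_int
      rw [setIntegral_congr_fun measurableSet_Ioi (fun x _ =>
        bessel_expand (Real.exp (-(s*x))) (f x) N (fun k => a k s) (fun k => u k x))]
      rw [integral_add hAB_int hC_int, integral_sub h_int_f2 hB_int,
        integral_finset_sum _ (fun k _ => ((h_int_uf k).const_mul _)),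
        integral_finset_sum _ (fun k _ => integrable_finset_sum _ fun l _ =>
          ((h_int_uu k l).const_mul _))]
      have hBval : ∑ k ∈ range N, (∫ x in Set.Ioi (0:ℝ),
          (2 * a k s) * (Real.exp (-(s*x)) * f x * u k x))
          = ∑ k ∈ range N, 2 * (a k s)^2 := by
        refine Finset.sum_congr rfl fun k _ => ?_
        rw [integral_const_mul, ← h_a k]
        ring
      have hCval : ∑ k ∈ range N, ∑ l ∈ range N, (∫ x in Set.Ioi (0:ℝ),
          (a k s * a l s) * (Real.exp (-(s*x)) * u k x * u l x))
          = ∑ k ∈ range N, (a k s)^2 := by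
        refine Finset.sum_congr rfl fun k hk => ?_
        have : ∀ l ∈ range N, (∫ x in Set.Ioi (0:ℝ),
            (a k s * a l s) * (Real.exp (-(s*x)) * u k x * u l x))
            = if k = l then a k s * a l s else 0 := by
          intro l _
          rw [integral_const_mul, h_ortho_u k l]
          by_cases h : k = l <;> simp [h]
        rw [Finset.sum_congr rfl this, Finset.sum_ite_eq (range N) k (fun l => a k s * a l s),
          if_pos hk, sq]
      rw [Finset.sum_congr rfl (fun k (_ : k ∈ range N) =>
        integral_finset_sum (range N) (fun l _ => ((h_int_uu k l).const_mul (a k s * a l s))))]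
      rw [hBval, hCval]
      have h2 : ∑ k ∈ range N, 2 * (a k s)^2 = 2 * ∑ k ∈ range N, (a k s)^2 :=
        (Finset.mul_sum _ _ _).symm
      rw [h2]
      ring
    rw [hcomp] at h0
    linarith
  -- conclusion
  have hterm : ∀ k : ℕ, (fwd^[k] (fun n => s ^ n * φ n s) 0)^2 = (a k s)^2 / s := by
    intro k
    rw [(part1 k).2, div_pow, Real.sq_sqrt hs0.le]
  have hsum : ∀ N : ℕ, ∑ k ∈ range N, (fwd^[k] (fun n => s ^ n * φ n s) 0)^2
      ≤ (1/s) * ∫ x in Set.Ioi (0:ℝ), Real.exp (-(s*x)) * (f x)^2 := by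
    intro N
    calc ∑ k ∈ range N, (fwd^[k] (fun n => s ^ n * φ n s) 0)^2
        = (∑ k ∈ range N, (a k s)^2) / s := by
          rw [Finset.sum_div]
          exact Finset.sum_congr rfl fun k _ => hterm k
      _ ≤ (∫ x in Set.Ioi (0:ℝ), Real.exp (-(s*x)) * (f x)^2) / s :=
          (div_le_div_iff_of_pos_right hs0).mpr (key N)
      _ = (1/s) * ∫ x in Set.Ioi (0:ℝ), Real.exp (-(s*x)) * (f x)^2 := by
          rw [one_div, inv_mul_eq_div]
  exact ⟨part1, summable_of_sum_range_le (fun k => sq_nonneg _) hsum,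
    Real.tsum_le_of_sum_range_le (fun k => sq_nonneg _) hsum⟩
end

section
/- For s > 0 and n ∈ ℕ, ∫₀^∞ e^{-s t}(tⁿ/n!) ln t dt = (Hₙ - γ - ln s)/s^{n+1}, where Hₙ = Σ_{k=1}^{n} 1/k is the n-th harmonic number and γ is the Euler–Mascheroni constant. -/
open MeasureTheory Real

private lemma abs_log_le (t : ℝ) (ht : 0 < t) :
    |Real.log t| ≤ 2 * t ^ (1/2 : ℝ) + 2 * t ^ (-(1/2) : ℝ) := by
  have h1 : Real.log t ≤ 2 * t ^ (1/2 : ℝ) := by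
    have := Real.log_le_sub_one_of_pos (Real.rpow_pos_of_pos ht (1/2))
    have hl : Real.log (t ^ (1/2 : ℝ)) = (1/2) * Real.log t := Real.log_rpow ht _
    nlinarith [Real.rpow_pos_of_pos ht (1/2 : ℝ)]
  have h2 : -Real.log t ≤ 2 * t ^ (-(1/2) : ℝ) := by
    have hinv : 0 < t⁻¹ := inv_pos.mpr ht
    have := Real.log_le_sub_one_of_pos (Real.rpow_pos_of_pos hinv (1/2))
    have hl : Real.log (t⁻¹ ^ (1/2 : ℝ)) = (1/2) * Real.log t⁻¹ := Real.log_rpow hinv _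
    have hli : Real.log t⁻¹ = -Real.log t := Real.log_inv t
    have hr : t⁻¹ ^ (1/2 : ℝ) = t ^ (-(1/2) : ℝ) := by
      rw [Real.inv_rpow ht.le, ← Real.rpow_neg ht.le]
    nlinarith [Real.rpow_pos_of_pos ht (-(1/2) : ℝ)]
  have hp1 : 0 < t ^ (1/2 : ℝ) := Real.rpow_pos_of_pos ht _
  have hp2 : 0 < t ^ (-(1/2) : ℝ) := Real.rpow_pos_of_pos ht _
  rw [abs_le]
  constructor <;> nlinarith

private lemma integrable_exp_pow_log (n : ℕ) :
    IntegrableOn (fun t : ℝ => Real.exp (-t) * t ^ n * Real.log t) (Set.Ioi 0) := by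
  have hbig : IntegrableOn
      (fun t : ℝ => 2 * (Real.exp (-t) * t ^ ((n : ℝ) + 3/2 - 1))
        + 2 * (Real.exp (-t) * t ^ ((n : ℝ) + 1/2 - 1))) (Set.Ioi 0) := by
    exact ((Real.GammaIntegral_convergent (by positivity : (0:ℝ) < (n : ℝ) + 3/2)).const_mul
      2).add ((Real.GammaIntegral_convergent (by positivity : (0:ℝ) < (n : ℝ) + 1/2)).const_mul 2)
  refine hbig.mono' ?_ ?_
  · exact (((Real.measurable_exp.comp measurable_neg).mul (measurable_id.pow_const n)).mul Real.measurable_log).aestronglyMeasurable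
  · rw [ae_restrict_iff' measurableSet_Ioi]
    filter_upwards with t ht
    have ht : (0:ℝ) < t := ht
    have he : 0 < Real.exp (-t) := Real.exp_pos _
    have hpow : (0:ℝ) ≤ t ^ n := by positivity
    have hb := abs_log_le t ht
    have h1 : t ^ n * t ^ (1/2 : ℝ) = t ^ ((n : ℝ) + 3/2 - 1) := by
      rw [← Real.rpow_natCast t n, ← Real.rpow_add ht]
      ring_nf
    have h2 : t ^ n * t ^ (-(1/2) : ℝ) = t ^ ((n : ℝ) + 1/2 - 1) := by
      rw [← Real.rpow_natCast t n, ← Real.rpow_add ht]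
      ring_nf
    rw [norm_mul, norm_mul, Real.norm_eq_abs, Real.norm_eq_abs, Real.norm_eq_abs,
      abs_of_pos he, abs_of_nonneg hpow]
    calc Real.exp (-t) * t ^ n * |Real.log t|
        ≤ Real.exp (-t) * t ^ n * (2 * t ^ (1/2 : ℝ) + 2 * t ^ (-(1/2) : ℝ)) := by
          exact mul_le_mul_of_nonneg_left hb (by positivity)
      _ = 2 * (Real.exp (-t) * (t ^ n * t ^ (1/2 : ℝ)))
          + 2 * (Real.exp (-t) * (t ^ n * t ^ (-(1/2) : ℝ))) := by ring
      _ = _ := by rw [h1, h2]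

private lemma integrable_exp_pow (n : ℕ) :
    IntegrableOn (fun t : ℝ => Real.exp (-t) * t ^ n) (Set.Ioi 0) := by
  have := Real.GammaIntegral_convergent (by positivity : (0:ℝ) < (n : ℝ) + 1)
  refine this.congr_fun (fun t ht => ?_) measurableSet_Ioi
  have ht : (0:ℝ) < t := ht
  rw [add_sub_cancel_right]; simp only [Real.rpow_natCast]

private lemma integral_exp_pow (n : ℕ) :
    ∫ t in Set.Ioi (0:ℝ), Real.exp (-t) * t ^ n = n.factorial := by
  have h := Real.Gamma_eq_integral (by positivity : (0:ℝ) < (n : ℝ) + 1)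
  rw [Real.Gamma_nat_eq_factorial] at h
  refine Eq.trans (setIntegral_congr_fun measurableSet_Ioi (fun t ht => ?_)) h.symm
  have ht : (0:ℝ) < t := ht
  rw [add_sub_cancel_right, Real.rpow_natCast]

private lemma integral_exp_pow_log (n : ℕ) :
    ∫ t in Set.Ioi (0:ℝ), Real.exp (-t) * t ^ n * Real.log t
      = n.factorial * ((harmonic n : ℝ) - Real.eulerMascheroniConstant) := by
  have h1 := Complex.hasDerivAt_GammaIntegral (s := (n:ℂ) + 1) (by simp; positivity)
  have h2 : HasDerivAt Complex.GammaIntegral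
      ((n.factorial : ℂ) * (-Real.eulerMascheroniConstant + (harmonic n : ℂ))) ((n:ℂ) + 1) := by
    refine (Complex.hasDerivAt_Gamma_nat n).congr_of_eventuallyEq ?_
    have hopen : IsOpen {z : ℂ | 0 < z.re} := isOpen_lt continuous_const Complex.continuous_re
    filter_upwards [hopen.mem_nhds (by simp; positivity)] with z hz
    exact (Complex.Gamma_eq_integral hz).symm
  have huniq := h1.unique h2
  have hre : (∫ t : ℝ in Set.Ioi 0, (t:ℂ) ^ ((n:ℂ) + 1 - 1) * (Real.log t * Real.exp (-t)))
      = ((∫ t in Set.Ioi (0:ℝ), Real.exp (-t) * t ^ n * Real.log t : ℝ) : ℂ) := by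
    have hre1 : (∫ t : ℝ in Set.Ioi 0, (t:ℂ) ^ ((n:ℂ) + 1 - 1) * (Real.log t * Real.exp (-t)))
        = ∫ t : ℝ in Set.Ioi 0,
            (((Real.exp (-t) * t ^ n * Real.log t : ℝ) : ℂ)) := by
      refine setIntegral_congr_fun measurableSet_Ioi (fun t ht => ?_)
      have ht : (0:ℝ) < t := ht
      rw [add_sub_cancel_right]
      rw [show ((t:ℂ) ^ (n:ℂ)) = ((t:ℂ) ^ n) from Complex.cpow_natCast _ n]
      push_cast
      ring
    exact hre1.trans integral_ofReal
  have hfin : ((∫ t in Set.Ioi (0:ℝ), Real.exp (-t) * t ^ n * Real.log t : ℝ) : ℂ)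
      = (((n.factorial : ℝ) * ((harmonic n : ℝ) - Real.eulerMascheroniConstant) : ℝ) : ℂ) := by
    rw [← hre, huniq]
    push_cast
    ring
  exact_mod_cast hfin

theorem laplace_type_of_log (s : ℝ) (hs : 0 < s) (n : ℕ) :
    (∫ t in Set.Ioi (0:ℝ),
        Real.exp (-(s*t)) * (t ^ n / n.factorial) * Real.log t)
      = ((harmonic n : ℝ) - Real.eulerMascheroniConstant - Real.log s)
          / s ^ (n + 1) := by
  set g : ℝ → ℝ := fun u => Real.exp (-u) * (u / s) ^ n * Real.log (u / s) with hg
  have hcomp : ∀ t : ℝ, g (s * t) = Real.exp (-(s*t)) * t ^ n * Real.log t := by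
    intro t
    simp only [hg, mul_div_cancel_left₀ _ hs.ne']
  have hkey : (∫ t in Set.Ioi (0:ℝ), Real.exp (-(s*t)) * t ^ n * Real.log t)
      = s⁻¹ * ∫ u in Set.Ioi (0:ℝ), g u := by
    have hc := integral_comp_mul_left_Ioi g 0 hs
    rw [mul_zero, smul_eq_mul] at hc
    rw [← hc]
    exact setIntegral_congr_fun measurableSet_Ioi (fun t _ => (hcomp t).symm)
  have hgval : (∫ u in Set.Ioi (0:ℝ), g u)
      = (s ^ n)⁻¹ * ((n.factorial : ℝ) * ((harmonic n : ℝ) - Real.eulerMascheroniConstant)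
          - Real.log s * n.factorial) := by
    have hsplit : ∀ u ∈ Set.Ioi (0:ℝ), g u
        = (s ^ n)⁻¹ * (Real.exp (-u) * u ^ n * Real.log u
            - Real.log s * (Real.exp (-u) * u ^ n)) := by
      intro u hu
      have hu : (0:ℝ) < u := hu
      simp only [hg, div_pow, Real.log_div hu.ne' hs.ne']
      field_simp
    rw [setIntegral_congr_fun measurableSet_Ioi hsplit, integral_const_mul,
      integral_sub (integrable_exp_pow_log n) ((integrable_exp_pow n).const_mul _),
      integral_const_mul, integral_exp_pow_log n, integral_exp_pow n]
  have hfac : ∀ t : ℝ, Real.exp (-(s*t)) * (t ^ n / n.factorial) * Real.log t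
      = (n.factorial : ℝ)⁻¹ * (Real.exp (-(s*t)) * t ^ n * Real.log t) := by
    intro t; field_simp
  rw [setIntegral_congr_fun measurableSet_Ioi (fun t _ => hfac t), integral_const_mul,
    hkey, hgval]
  have hfacpos : (0:ℝ) < n.factorial := by positivity
  field_simp
  ring
end
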